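/- Let d ≥ 2, n, k ∈ ℕ, and let w : E_d → (0,∞) be positive edge weights such that {π_z : z ∈ B_n} are pairwise distinct. Let φ be a nonnegative ℓ²-normalized eigenvector of the Dirichlet matrix −1_S L^w 1_S on S = 𝓑_k^{(n)} corresponding to its smallest eigenvalue. Let y, z ∈ S satisfy π_z < π_y and y not adjacent to z. Then φ(y) ≤ m_y / (1 − π_z/π_y), where m_y = 2·max_{x : x∼y} φ(x) (φ being extended by 0 outside S). -/

import Mathlib

open MeasureTheory ProbabilityTheory Filter

noncomputable section

abbrev V (d : ℕ) := Fin d → ℤ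

/-- Nearest-neighbor adjacency on `ℤ^d`: `|x - y|₁ = 1`. -/
def adj {d : ℕ} (x y : V d) : Prop := (∑ i, |x i - y i|) = 1

instance {d : ℕ} (x y : V d) : Decidable (adj x y) := by unfold adj; infer_instance

/-- The finite set of nearest neighbors of a site. -/
def nbrs {d : ℕ} (z : V d) : Finset (V d) :=
  (Finset.Icc (z - 1) (z + 1)).filter (fun y => adj z y)

/-- The local speed measure `π_z = ∑_{y ∼ z} w z y`. -/
def speed {d : ℕ} (w : V d → V d → ℝ) (z : V d) : ℝ := ∑ y ∈ nbrs z, w z y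

/-- The box `B_n = [-n, n]^d ∩ ℤ^d`. -/
def box (d n : ℕ) : Finset (V d) := Finset.Icc (fun _ => -(n : ℤ)) (fun _ => (n : ℤ))

/-- The `k`-th smallest element (1-indexed, with multiplicity) of a multiset of reals. -/
def orderStat (s : Multiset ℝ) (k : ℕ) : ℝ := (s.sort (· ≤ ·)).getD (k - 1) 0

/-- `π_{k, B_n}`, the `k`-th order statistic of `{π_z : z ∈ B_n}`. -/
def piOrd {d : ℕ} (w : V d → V d → ℝ) (n k : ℕ) : ℝ :=
  orderStat ((box d n).val.map (speed w)) k

/-- The Dirichlet matrix `-1_S L^w 1_S` on a finite set `S`. -/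
def dMat {d : ℕ} (w : V d → V d → ℝ) (S : Finset (V d)) : Matrix S S ℝ :=
  fun x y => (if (x : V d) = (y : V d) then speed w (x : V d) else 0) -
    (if adj (x : V d) (y : V d) then w (x : V d) (y : V d) else 0)

/-- The `k`-th smallest eigenvalue (1-indexed, with multiplicity) of a symmetric real
matrix (junk value `0` if the matrix is not symmetric). -/
def eigs {m : Type*} [Fintype m] [DecidableEq m] (A : Matrix m m ℝ) (k : ℕ) : ℝ :=
  if hA : A.IsHermitian then orderStat (Finset.univ.val.map hA.eigenvalues) k else 0

/-- The set `𝓑_l^{(n)} = B_n \ {z_{(1,n)}, …, z_{(l-1,n)}}`: the box with the sites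
carrying the `l - 1` smallest values of `π` removed. -/
def BB {d : ℕ} (w : V d → V d → ℝ) (n l : ℕ) : Finset (V d) :=
  (box d n).filter (fun z => piOrd w n l ≤ speed w z)

/-- `g(u) = sup {s ≥ 0 : F s = u^{-1/2}}`. -/
def gfun (F : ℝ → ℝ) (u : ℝ) : ℝ := sSup {s : ℝ | 0 ≤ s ∧ F s = u ^ (-(1/2 : ℝ))}

/-- `G` varies regularly at zero with index `γ`. -/
def RegVarZero (G : ℝ → ℝ) (γ : ℝ) : Prop :=
  ∀ b > (0:ℝ), Tendsto (fun a => G (a * b) / G a) (nhdsWithin 0 (Set.Ioi 0)) (nhds (b ^ γ))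

/-- `G` varies regularly at infinity with index `ρ`. -/
def RegVarInfty (G : ℝ → ℝ) (ρ : ℝ) : Prop :=
  ∀ l > (0:ℝ), Tendsto (fun u => G (l * u) / G u) atTop (nhds (l ^ ρ))

/-- The conductances are i.i.d., positive, symmetric, with marginal distribution
function `F`. -/
def IIDConductances {d : ℕ} {Ω : Type*} [MeasurableSpace Ω] (P : Measure Ω)
    (w : Ω → V d → V d → ℝ) (F : ℝ → ℝ) : Prop :=
  (∀ ω x y, w ω x y = w ω y x) ∧
  (∀ ω x y, adj x y → 0 < w ω x y) ∧
  (∀ x y : V d, Measurable fun ω => w ω x y) ∧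
  iIndepFun
    (fun (p : V d × Fin d) ω => w ω p.1 (p.1 + Pi.single p.2 1)) P ∧
  (∀ (x : V d) (i : Fin d) (u : ℝ),
    (P {ω | w ω x (x + Pi.single i 1) ≤ u}).toReal = F u)

/-- Assumption A with the choice of `ε₁` left existential (as used for the
almost-sure convergence statement). -/
def AssumptionA0 (F : ℝ → ℝ) (γ : ℝ) : Prop :=
  Continuous F ∧ RegVarZero F γ ∧ 0 ≤ γ ∧ γ < 1/4 ∧
  (∃ astar > (0:ℝ), ∀ a, 0 < a → a ≤ astar → ∀ b, 0 ≤ b → b ≤ 1 → b * F a ≤ F (a * b)) ∧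
  (γ = 0 → ∃ ε₁ ∈ Set.Ioo (0:ℝ) 1,
    Antitone (fun n : ℕ => (n : ℝ) ^ ((2:ℝ) + ε₁) * gfun F n) ∧
    Tendsto (fun n : ℕ => (n : ℝ) ^ ((2:ℝ) + ε₁) * gfun F n) atTop (nhds 0))

/-- Assumption A together with a fixed admissible exponent `ε₁`:
if `γ = 0` then `n^{2+ε₁} g(n)` decreases monotonically to `0`;
if `γ > 0` then `1/(2γ) > 2 + ε₁`. -/
def AssumptionAe (F : ℝ → ℝ) (γ ε₁ : ℝ) : Prop :=
  Continuous F ∧ RegVarZero F γ ∧ 0 ≤ γ ∧ γ < 1/4 ∧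
  (∃ astar > (0:ℝ), ∀ a, 0 < a → a ≤ astar → ∀ b, 0 ≤ b → b ≤ 1 → b * F a ≤ F (a * b)) ∧
  0 < ε₁ ∧ ε₁ < 1 ∧
  (γ = 0 →
    Antitone (fun n : ℕ => (n : ℝ) ^ ((2:ℝ) + ε₁) * gfun F n) ∧
    Tendsto (fun n : ℕ => (n : ℝ) ^ ((2:ℝ) + ε₁) * gfun F n) atTop (nhds 0)) ∧
  (0 < γ → 2 + ε₁ < 1 / (2 * γ))

section AuxLemmas
open Matrix

lemma aux_adj_comm {d : ℕ} (x y : V d) : adj x y ↔ adj y x := by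
  unfold adj
  rw [show (∑ i, |x i - y i|) = ∑ i, |y i - x i| from
    Finset.sum_congr rfl fun i _ => abs_sub_comm _ _]

lemma aux_not_adj_self {d : ℕ} (z : V d) : ¬ adj z z := by
  unfold adj; simp

lemma aux_mem_nbrs {d : ℕ} (z x : V d) : x ∈ nbrs z ↔ adj z x := by
  simp only [nbrs, Finset.mem_filter, and_iff_right_iff_imp]
  intro h
  have hb : ∀ i, |z i - x i| ≤ 1 := fun i =>
    (Finset.single_le_sum (f := fun i => |z i - x i|)
      (fun j _ => abs_nonneg _) (Finset.mem_univ i)).trans_eq h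
  rw [Finset.mem_Icc]
  constructor <;> intro i <;>
    simp only [Pi.sub_apply, Pi.add_apply, Pi.one_apply] <;>
    have := abs_le.mp (hb i) <;> omega

lemma aux_adj_single {d : ℕ} (hd : 0 < d) (y : V d) :
    adj y ((y + Pi.single (⟨0, hd⟩ : Fin d) 1 : V d)) := by
  unfold adj
  have h : ∀ i, |y i - ((y + Pi.single (⟨0, hd⟩ : Fin d) 1 : V d)) i| =
      if i = ⟨0, hd⟩ then 1 else 0 := by
    intro i
    by_cases h : i = ⟨0, hd⟩ <;> simp [h, Pi.single_apply]
  have h2 : ∀ x : Fin d, |(Pi.single (⟨0, hd⟩ : Fin d) 1 : V d) x| =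
      if x = ⟨0, hd⟩ then 1 else 0 := by
    intro x; by_cases hx : x = ⟨0, hd⟩ <;> simp [hx, Pi.single_apply]
  simp [h, h2]

lemma aux_speed_pos {d : ℕ} (hd : 0 < d) (w : V d → V d → ℝ)
    (hpos : ∀ x y, adj x y → 0 < w x y) (z : V d) : 0 < speed w z :=
  Finset.sum_pos (fun x hx => hpos z x ((aux_mem_nbrs z x).mp hx))
    ⟨_, (aux_mem_nbrs z _).mpr (aux_adj_single hd z)⟩

lemma aux_dMat_herm {d : ℕ} (w : V d → V d → ℝ) (hsymm : ∀ x y, w x y = w y x)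
    (S : Finset (V d)) : (dMat w S).IsHermitian := by
  unfold Matrix.IsHermitian
  ext i j
  simp only [Matrix.conjTranspose_apply, star_trivial, dMat]
  congr 1
  · by_cases h : (j : V d) = (i : V d)
    · rw [if_pos h, if_pos h.symm, h]
    · rw [if_neg h, if_neg (fun h' => h h'.symm)]
  · by_cases h : adj (j : V d) (i : V d)
    · rw [if_pos h, if_pos ((aux_adj_comm _ _).mp h), hsymm]
    · rw [if_neg h, if_neg (fun h' => h ((aux_adj_comm _ _).mp h'))]

lemma aux_orderStat_one_le {s : Multiset ℝ} {a : ℝ} (ha : a ∈ s) : orderStat s 1 ≤ a := by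
  unfold orderStat
  have hs : (s.sort (· ≤ ·)).Pairwise (· ≤ ·) := Multiset.pairwise_sort _ _
  have ham : a ∈ s.sort (· ≤ ·) := by rwa [Multiset.mem_sort]
  cases h : s.sort (· ≤ ·) with
  | nil => rw [h] at ham; simp at ham
  | cons b t =>
    rw [h] at ham hs
    rw [show (1 - 1 : ℕ) = 0 from rfl, List.getD_cons_zero]
    rcases List.mem_cons.mp ham with rfl | hat
    · exact le_refl a
    · exact (List.pairwise_cons.mp hs).1 a hat

lemma aux_eigs_le {m : Type*} [Fintype m] [DecidableEq m] {A : Matrix m m ℝ}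
    (hA : A.IsHermitian) (i : m) : eigs A 1 ≤ hA.eigenvalues i := by
  rw [eigs, dif_pos hA]
  exact aux_orderStat_one_le (Multiset.mem_map_of_mem _ (Finset.mem_univ i))

lemma aux_rayleigh {m : Type*} [Fintype m] [DecidableEq m] {A : Matrix m m ℝ}
    (hA : A.IsHermitian) {c : ℝ} (hc : ∀ i, c ≤ hA.eigenvalues i) (x : m → ℝ) :
    c * (x ⬝ᵥ x) ≤ x ⬝ᵥ A *ᵥ x := by
  set U : Matrix m m ℝ := (hA.eigenvectorUnitary : Matrix m m ℝ) with hUdef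
  have hU : U * star U = 1 := Matrix.mem_unitaryGroup_iff.mp hA.eigenvectorUnitary.2
  have hofReal : (RCLike.ofReal ∘ hA.eigenvalues : m → ℝ) = hA.eigenvalues :=
    funext fun i => rfl
  have hsub : A - c • 1 = U * Matrix.diagonal (fun i => hA.eigenvalues i - c) * star U := by
    have h1 : (c • 1 : Matrix m m ℝ) = U * (c • 1) * star U := by
      rw [Matrix.mul_smul, mul_one, Matrix.smul_mul, hU]
    nth_rewrite 1 [hA.spectral_theorem]
    rw [Unitary.conjStarAlgAut_apply, h1, ← hUdef, ← Matrix.sub_mul, ← Matrix.mul_sub, hofReal,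
      Matrix.smul_one_eq_diagonal, ← Matrix.diagonal_sub]
  have hps : (A - c • 1).PosSemidef := by
    rw [hsub, show star U = Uᴴ from rfl]
    exact (Matrix.posSemidef_diagonal_iff.mpr
      (fun i => sub_nonneg.mpr (hc i))).mul_mul_conjTranspose_same U
  have h := hps.dotProduct_mulVec_nonneg x
  simp only [star_trivial, Matrix.sub_mulVec, dotProduct_sub,
    Matrix.smul_mulVec, Matrix.one_mulVec, dotProduct_smul,
    smul_eq_mul] at h
  linarith

end AuxLemmas

open Matrix in
/-- bound on the mass of a nonnegative principal Dirichlet eigenvector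
of `𝓑_k^{(n)}` at a site `y` whose speed is not minimal. -/
theorem principal_eigenvector_mass_bound {d : ℕ} (hd : 2 ≤ d) (n k : ℕ)
    (w : V d → V d → ℝ)
    (hsymm : ∀ x y, w x y = w y x) (hpos : ∀ x y, adj x y → 0 < w x y)
    (hdist : ∀ z₁ ∈ box d n, ∀ z₂ ∈ box d n, z₁ ≠ z₂ → speed w z₁ ≠ speed w z₂)
    (φ : ↥(BB w n k) → ℝ) (hnn : ∀ x, 0 ≤ φ x) (hnorm : (∑ x, φ x ^ 2) = 1)
    (heig : (dMat w (BB w n k)).mulVec φ = eigs (dMat w (BB w n k)) 1 • φ)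
    (y z : V d) (hy : y ∈ BB w n k) (hz : z ∈ BB w n k)
    (hπ : speed w z < speed w y) (hnadj : ¬ adj y z) :
    φ ⟨y, hy⟩ ≤
      (2 * sSup ((fun x : V d => if hx : x ∈ BB w n k then φ ⟨x, hx⟩ else 0) ''
          {x : V d | adj y x})) / (1 - speed w z / speed w y) := by
  classical
  have hd0 : 0 < d := by omega
  have hA : (dMat w (BB w n k)).IsHermitian := aux_dMat_herm w hsymm (BB w n k)
  set lam := eigs (dMat w (BB w n k)) 1 with hlam
  set f : V d → ℝ := fun x => if hx : x ∈ BB w n k then φ ⟨x, hx⟩ else 0 with hf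
  set M := sSup (f '' {x : V d | adj y x}) with hM
  -- the image set is finite and nonempty
  have himg : f '' {x : V d | adj y x} = f '' ((nbrs y : Finset (V d)) : Set (V d)) := by
    congr 1
    ext x
    simp [aux_mem_nbrs]
  have hfin : (f '' {x : V d | adj y x}).Finite := by
    rw [himg]; exact ((nbrs y).finite_toSet).image f
  have hbdd : BddAbove (f '' {x : V d | adj y x}) := hfin.bddAbove
  have hx0 : adj y ((y + Pi.single (⟨0, hd0⟩ : Fin d) 1 : V d)) := aux_adj_single hd0 y
  have hfnn : ∀ x : V d, 0 ≤ f x := by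
    intro x
    by_cases hx : x ∈ BB w n k
    · simp only [hf, dif_pos hx]; exact hnn _
    · simp only [hf, dif_neg hx]; exact le_refl 0
  have hM0 : 0 ≤ M := le_trans (hfnn _) (le_csSup hbdd ⟨_, hx0, rfl⟩)
  have hMx : ∀ (x : V d) (hx : x ∈ BB w n k), adj y x → φ ⟨x, hx⟩ ≤ M := by
    intro x hx hadj
    have hfx : φ ⟨x, hx⟩ = f x := by simp [hf, hx]
    rw [hfx]
    exact le_csSup hbdd ⟨x, hadj, rfl⟩
  -- speeds
  have hsy : 0 < speed w y := aux_speed_pos hd0 w hpos y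
  have hsz : 0 < speed w z := aux_speed_pos hd0 w hpos z
  -- lam ≤ speed w z via Rayleigh with the delta function at z
  have hlamz : lam ≤ speed w z := by
    set δ : {v // v ∈ BB w n k} → ℝ := Pi.single (⟨z, hz⟩ : {v // v ∈ BB w n k}) 1 with hδ
    have hray := aux_rayleigh hA (fun i => aux_eigs_le hA i) δ
    have h1 : δ ⬝ᵥ δ = 1 := by
      rw [hδ, single_dotProduct]
      simp
    have h2 : δ ⬝ᵥ (dMat w (BB w n k)) *ᵥ δ = speed w z := by
      rw [hδ, Matrix.mulVec_single, single_dotProduct]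
      simp [dMat, aux_not_adj_self z]
    rw [h1, h2, mul_one] at hray
    exact hray
  -- the eigenvalue equation at y
  set T := ∑ x : {v // v ∈ BB w n k},
      (if adj y (x : V d) then w y (x : V d) else 0) * φ x with hT
  have heqy : speed w y * φ ⟨y, hy⟩ - T = lam * φ ⟨y, hy⟩ := by
    have h := congrFun heig ⟨y, hy⟩
    have hmv : ((dMat w (BB w n k)) *ᵥ φ) ⟨y, hy⟩ =
        ∑ x : {v // v ∈ BB w n k}, ((if y = (x : V d) then speed w y else 0) -
          (if adj y (x : V d) then w y (x : V d) else 0)) * φ x := by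
      simp only [Matrix.mulVec, dotProduct, dMat]
    have h1 : ∑ x : {v // v ∈ BB w n k}, (if y = (x : V d) then speed w y else 0) * φ x =
        speed w y * φ ⟨y, hy⟩ := by
      rw [Finset.sum_eq_single (⟨y, hy⟩ : {v // v ∈ BB w n k})]
      · rw [if_pos rfl]
      · intro b _ hb
        rw [if_neg, zero_mul]
        exact fun hcontra => hb (Subtype.ext hcontra.symm)
      · intro habs; exact absurd (Finset.mem_univ _) habs
    rw [hmv] at h
    simp only [sub_mul, Finset.sum_sub_distrib, h1] at h
    rw [← hT] at h
    rw [h]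
    simp
  -- bound T
  have hTle : T ≤ speed w y * M := by
    have hstep : T ≤ (∑ x : {v // v ∈ BB w n k},
        if adj y (x : V d) then w y (x : V d) else 0) * M := by
      rw [Finset.sum_mul, hT]
      refine Finset.sum_le_sum fun x _ => ?_
      by_cases hadj : adj y (x : V d)
      · simp only [if_pos hadj]
        exact mul_le_mul_of_nonneg_left (hMx _ x.2 hadj) (le_of_lt (hpos _ _ hadj))
      · simp [hadj]
    refine hstep.trans (mul_le_mul_of_nonneg_right ?_ hM0)
    have hsum : (∑ x : {v // v ∈ BB w n k}, if adj y (x : V d) then w y (x : V d) else 0) =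
        ∑ x ∈ (BB w n k).filter (fun v => adj y v), w y x := by
      rw [Finset.sum_filter]
      exact Finset.sum_coe_sort (BB w n k) (fun v => if adj y v then w y v else 0)
    rw [hsum]
    refine Finset.sum_le_sum_of_subset_of_nonneg ?_ ?_
    · intro x hx
      exact (aux_mem_nbrs y x).mpr (Finset.mem_filter.mp hx).2
    · intro x hx _
      exact le_of_lt (hpos y x ((aux_mem_nbrs y x).mp hx))
  -- put everything together
  set s := speed w y with hs_def
  set t := speed w z with ht_def
  set p := φ ⟨y, hy⟩ with hp_def
  have hpnn : 0 ≤ p := hnn _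
  have hst : t < s := hπ
  have hkey : p * (s - t) ≤ s * M := by
    have h1 : p * lam ≤ p * t := mul_le_mul_of_nonneg_left hlamz hpnn
    nlinarith [heqy, hTle]
  have hden : (0:ℝ) < 1 - t / s := by
    rw [sub_pos, div_lt_one hsy]
    exact hst
  rw [le_div_iff₀ hden]
  have hexp : p * (1 - t / s) = p * (s - t) / s := by
    field_simp
  rw [hexp, div_le_iff₀ hsy]
  nlinarith [hkey, mul_nonneg (le_of_lt hsy) hM0, hM0, hsy]
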